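/- Let B be the Gram matrix of Δ⁻_{2n,r} with n ≥ 2 and r ≥ 1. If 2/n + 1/r < 1 then B is nondegenerate and has exactly one positive eigenvalue (it is hyperbolic). -/

import Mathlib

open scoped Matrix

/-- The Gram matrix of `Δ⁻_{2n,r}`: a cycle `v₀, …, v_{2n-1}` with all edges of
multiplicity `1` except the edge `v₀ v_{2n-1}`, which has multiplicity `-1`,
together with an arm `w₀, …, w_{r-1}` with `w_{r-1}` joined to `v₀`; every
vertex has square `-2`. -/
def gramDelta (n r : ℕ) : Matrix (Fin (2 * n) ⊕ Fin r) (Fin (2 * n) ⊕ Fin r) ℝ :=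
  fun a b =>
    match a, b with
    | Sum.inl i, Sum.inl j =>
        if i = j then -2
        else if (i : ℕ) + 1 = (j : ℕ) ∨ (j : ℕ) + 1 = (i : ℕ) then 1
        else if ((i : ℕ) = 0 ∧ (j : ℕ) = 2 * n - 1) ∨ ((j : ℕ) = 0 ∧ (i : ℕ) = 2 * n - 1)
          then -1 else 0
    | Sum.inr j, Sum.inr k =>
        if j = k then -2
        else if (j : ℕ) + 1 = (k : ℕ) ∨ (k : ℕ) + 1 = (j : ℕ) then 1 else 0
    | Sum.inl i, Sum.inr j => if (i : ℕ) = 0 ∧ (j : ℕ) + 1 = r then 1 else 0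
    | Sum.inr j, Sum.inl i => if (i : ℕ) = 0 ∧ (j : ℕ) + 1 = r then 1 else 0


open Sum Finset

/-- Extension of a `Fin M`-vector to `ℕ` by zero. -/
def uext {M : ℕ} (x : Fin M → ℝ) : ℕ → ℝ := fun k => if h : k < M then x ⟨k, h⟩ else 0

lemma uext_lt {M : ℕ} (x : Fin M → ℝ) {k : ℕ} (h : k < M) : uext x k = x ⟨k, h⟩ := dif_pos h

lemma uext_ge {M : ℕ} (x : Fin M → ℝ) {k : ℕ} (h : M ≤ k) : uext x k = 0 :=
  dif_neg (by omega)

lemma uext_coe {M : ℕ} (x : Fin M → ℝ) (i : Fin M) : uext x (i : ℕ) = x i := by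
  rw [uext_lt x i.isLt]

lemma uext_mul_left {M : ℕ} (x : Fin M → ℝ) (a : ℝ) (c : ℕ) :
    uext (fun j => a * x j) c = a * uext x c := by
  unfold uext; split <;> simp

lemma uext_mul_right {M : ℕ} (x : Fin M → ℝ) (a : ℝ) (c : ℕ) :
    uext (fun j => x j * a) c = uext x c * a := by
  unfold uext; split <;> simp

lemma uext_neg {M : ℕ} (x : Fin M → ℝ) (c : ℕ) :
    uext (fun j => -(x j)) c = -(uext x c) := by
  unfold uext; split <;> simp

lemma sum_ite_nat_eq {M : ℕ} (c : ℕ) (f : Fin M → ℝ) :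
    (∑ j : Fin M, if c = (j : ℕ) then f j else 0) = uext f c := by
  by_cases h : c < M
  · have hiff : ∀ j : Fin M, (c = (j : ℕ)) ↔ ((⟨c, h⟩ : Fin M) = j) := by
      intro j; simp [Fin.ext_iff]
    simp_rw [hiff]
    rw [Finset.sum_ite_eq]
    simp [uext_lt f h]
  · rw [uext_ge f (le_of_not_gt h)]
    apply Finset.sum_eq_zero
    intro j _
    have := j.isLt
    rw [if_neg]; omega

lemma sum_sum_ite_pair {M R : ℕ} (a b : ℕ) (f : Fin M → Fin R → ℝ) :
    (∑ i : Fin M, ∑ j : Fin R, if a = (i : ℕ) ∧ b = (j : ℕ) then f i j else 0)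
      = uext (fun i => uext (f i) b) a := by
  have h1 : ∀ i : Fin M,
      (∑ j : Fin R, if a = (i : ℕ) ∧ b = (j : ℕ) then f i j else 0)
        = if a = (i : ℕ) then uext (f i) b else 0 := by
    intro i
    by_cases hi : a = (i : ℕ)
    · simp only [hi, true_and, if_pos rfl]
      exact sum_ite_nat_eq b (f i)
    · simp [hi]
  simp_rw [h1]
  exact sum_ite_nat_eq a _

lemma gdSumPair {M : ℕ} (x : Fin M → ℝ) :
    (∑ i : Fin M, ∑ j : Fin M, if (i : ℕ) + 1 = (j : ℕ) then x i * x j else 0)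
      = ∑ i ∈ range (M - 1), uext x i * uext x (i + 1) := by
  have h1 : ∀ i : Fin M,
      (∑ j : Fin M, if (i : ℕ) + 1 = (j : ℕ) then x i * x j else 0)
        = uext x (i : ℕ) * uext x ((i : ℕ) + 1) := by
    intro i
    rw [sum_ite_nat_eq ((i : ℕ) + 1) (fun j => x i * x j), uext_mul_left, uext_coe]
  simp_rw [h1]
  rw [Fin.sum_univ_eq_sum_range (fun k => uext x k * uext x (k + 1)) M]
  cases M with
  | zero => simp
  | succ m =>
    rw [Finset.sum_range_succ, uext_ge x (by omega : m + 1 ≥ m + 1)]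
    simp

lemma gdSumPair' {M : ℕ} (x : Fin M → ℝ) :
    (∑ i : Fin M, ∑ j : Fin M, if (j : ℕ) + 1 = (i : ℕ) then x i * x j else 0)
      = ∑ i ∈ range (M - 1), uext x i * uext x (i + 1) := by
  rw [Finset.sum_comm]
  have h1 : ∀ j : Fin M,
      (∑ i : Fin M, if (j : ℕ) + 1 = (i : ℕ) then x i * x j else 0)
        = uext x (j : ℕ) * uext x ((j : ℕ) + 1) := by
    intro j
    rw [sum_ite_nat_eq ((j : ℕ) + 1) (fun i => x i * x j), uext_mul_right, uext_coe]
    ring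
  simp_rw [h1]
  rw [Fin.sum_univ_eq_sum_range (fun k => uext x k * uext x (k + 1)) M]
  cases M with
  | zero => simp
  | succ m =>
    rw [Finset.sum_range_succ, uext_ge x (by omega : m + 1 ≥ m + 1)]
    simp

lemma gramDelta_isHermitian (n r : ℕ) : (gramDelta n r).IsHermitian := by
  ext a b
  cases a <;> cases b <;>
    simp only [Matrix.conjTranspose_apply, gramDelta, star_trivial, Fin.ext_iff] <;>
    split_ifs <;> first | rfl | omega

lemma block_ll (n r : ℕ) (hn : 2 ≤ n) (x : Fin (2 * n) → ℝ) :
    (∑ i : Fin (2 * n), ∑ j : Fin (2 * n), x i * (gramDelta n r (inl i) (inl j) * x j))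
      = -2 * (∑ i ∈ range (2 * n), uext x i ^ 2)
        + 2 * (∑ i ∈ range (2 * n - 1), uext x i * uext x (i + 1))
        - 2 * (uext x 0 * uext x (2 * n - 1)) := by
  have hdec : ∀ i j : Fin (2 * n), x i * (gramDelta n r (inl i) (inl j) * x j)
      = (if i = j then (-2) * (x i * x j) else 0)
        + ((if (i : ℕ) + 1 = (j : ℕ) then x i * x j else 0)
        + ((if (j : ℕ) + 1 = (i : ℕ) then x i * x j else 0)
        + ((if (0 = (i : ℕ) ∧ 2 * n - 1 = (j : ℕ)) then -(x i * x j) else 0)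
        + (if (2 * n - 1 = (i : ℕ) ∧ 0 = (j : ℕ)) then -(x i * x j) else 0)))) := by
    intro i j
    have hi := i.isLt; have hj := j.isLt
    simp only [gramDelta, Fin.ext_iff]
    split_ifs <;> first | ring1 | (exfalso; omega)
  simp only [hdec, Finset.sum_add_distrib]
  rw [gdSumPair, gdSumPair', sum_sum_ite_pair 0 (2 * n - 1) (fun i j => -(x i * x j)),
    sum_sum_ite_pair (2 * n - 1) 0 (fun i j => -(x i * x j))]
  have c0 : (0:ℕ) < 2 * n := by omega
  have c1 : 2 * n - 1 < 2 * n := by omega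
  have e1 : (∑ i : Fin (2 * n), ∑ j : Fin (2 * n), if i = j then (-2) * (x i * x j) else 0)
      = -2 * (∑ i ∈ range (2 * n), uext x i ^ 2) := by
    simp only [Finset.sum_ite_eq, Finset.mem_univ, if_true]
    rw [Finset.mul_sum, ← Fin.sum_univ_eq_sum_range (fun k => -2 * uext x k ^ 2) (2 * n)]
    apply Finset.sum_congr rfl
    intro i _
    rw [uext_coe]; ring
  have c2 : uext (fun i => uext (fun j => -(x i * x j)) (2 * n - 1)) 0
      = -(uext x 0 * uext x (2 * n - 1)) := by
    simp only [uext_lt _ c0, uext_lt _ c1]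
  have c3 : uext (fun i => uext (fun j => -(x i * x j)) 0) (2 * n - 1)
      = -(uext x (2 * n - 1) * uext x 0) := by
    simp only [uext_lt _ c0, uext_lt _ c1]
  rw [e1, c2, c3]
  ring

lemma block_rr (n r : ℕ) (w : Fin r → ℝ) :
    (∑ j : Fin r, ∑ k : Fin r, w j * (gramDelta n r (inr j) (inr k) * w k))
      = -2 * (∑ j ∈ range r, uext w j ^ 2)
        + 2 * (∑ j ∈ range (r - 1), uext w j * uext w (j + 1)) := by
  have hdec : ∀ j k : Fin r, w j * (gramDelta n r (inr j) (inr k) * w k)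
      = (if j = k then (-2) * (w j * w k) else 0)
        + ((if (j : ℕ) + 1 = (k : ℕ) then w j * w k else 0)
        + (if (k : ℕ) + 1 = (j : ℕ) then w j * w k else 0)) := by
    intro j k
    have hj := j.isLt; have hk := k.isLt
    simp only [gramDelta, Fin.ext_iff]
    split_ifs <;> first | ring1 | (exfalso; omega)
  simp only [hdec, Finset.sum_add_distrib]
  rw [gdSumPair, gdSumPair']
  have e1 : (∑ j : Fin r, ∑ k : Fin r, if j = k then (-2) * (w j * w k) else 0)
      = -2 * (∑ j ∈ range r, uext w j ^ 2) := by
    simp only [Finset.sum_ite_eq, Finset.mem_univ, if_true]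
    rw [Finset.mul_sum, ← Fin.sum_univ_eq_sum_range (fun k => -2 * uext w k ^ 2) r]
    apply Finset.sum_congr rfl
    intro j _
    rw [uext_coe]; ring
  rw [e1]
  ring

lemma block_lr (n r : ℕ) (hn : 2 ≤ n) (hr : 1 ≤ r) (x : Fin (2 * n) → ℝ) (w : Fin r → ℝ) :
    (∑ i : Fin (2 * n), ∑ j : Fin r, x i * (gramDelta n r (inl i) (inr j) * w j))
      = uext x 0 * uext w (r - 1) := by
  have hdec : ∀ (i : Fin (2 * n)) (j : Fin r),
      x i * (gramDelta n r (inl i) (inr j) * w j)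
        = if (0 = (i : ℕ) ∧ r - 1 = (j : ℕ)) then x i * w j else 0 := by
    intro i j
    have hj := j.isLt
    simp only [gramDelta]
    split_ifs <;> first | ring1 | (exfalso; omega)
  simp only [hdec]
  rw [sum_sum_ite_pair 0 (r - 1) (fun i j => x i * w j)]
  have c0 : (0:ℕ) < 2 * n := by omega
  have c1 : r - 1 < r := by omega
  simp only [uext_lt _ c0, uext_lt _ c1]

lemma block_rl (n r : ℕ) (hn : 2 ≤ n) (hr : 1 ≤ r) (x : Fin (2 * n) → ℝ) (w : Fin r → ℝ) :
    (∑ j : Fin r, ∑ i : Fin (2 * n), w j * (gramDelta n r (inr j) (inl i) * x i))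
      = uext x 0 * uext w (r - 1) := by
  have hdec : ∀ (j : Fin r) (i : Fin (2 * n)),
      w j * (gramDelta n r (inr j) (inl i) * x i)
        = if (r - 1 = (j : ℕ) ∧ 0 = (i : ℕ)) then w j * x i else 0 := by
    intro j i
    have hj := j.isLt
    simp only [gramDelta]
    split_ifs <;> first | ring1 | (exfalso; omega)
  simp only [hdec]
  rw [sum_sum_ite_pair (r - 1) 0 (fun j i => w j * x i)]
  have c0 : (0:ℕ) < 2 * n := by omega
  have c1 : r - 1 < r := by omega
  simp only [uext_lt _ c0, uext_lt _ c1]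
  ring

lemma quad_expand (n r : ℕ) (hn : 2 ≤ n) (hr : 1 ≤ r) (x : Fin (2 * n) ⊕ Fin r → ℝ) :
    x ⬝ᵥ (gramDelta n r *ᵥ x)
      = -2 * (∑ i ∈ range (2 * n), uext (x ∘ inl) i ^ 2)
        + 2 * (∑ i ∈ range (2 * n - 1), uext (x ∘ inl) i * uext (x ∘ inl) (i + 1))
        - 2 * (uext (x ∘ inl) 0 * uext (x ∘ inl) (2 * n - 1))
        + (-2 * (∑ j ∈ range r, uext (x ∘ inr) j ^ 2)
          + 2 * (∑ j ∈ range (r - 1), uext (x ∘ inr) j * uext (x ∘ inr) (j + 1)))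
        + 2 * (uext (x ∘ inl) 0 * uext (x ∘ inr) (r - 1)) := by
  have expand : x ⬝ᵥ (gramDelta n r *ᵥ x)
      = (∑ i : Fin (2 * n), ∑ j : Fin (2 * n),
            (x ∘ inl) i * (gramDelta n r (inl i) (inl j) * (x ∘ inl) j))
        + (∑ i : Fin (2 * n), ∑ j : Fin r,
            (x ∘ inl) i * (gramDelta n r (inl i) (inr j) * (x ∘ inr) j))
        + ((∑ j : Fin r, ∑ i : Fin (2 * n),
            (x ∘ inr) j * (gramDelta n r (inr j) (inl i) * (x ∘ inl) i))
        + (∑ j : Fin r, ∑ k : Fin r,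
            (x ∘ inr) j * (gramDelta n r (inr j) (inr k) * (x ∘ inr) k))) := by
    simp only [dotProduct, Matrix.mulVec, Fintype.sum_sum_type, Function.comp,
      mul_add, Finset.mul_sum, Finset.sum_add_distrib, mul_assoc]
    ring
  rw [expand, block_ll n r hn, block_rr n r, block_lr n r hn hr, block_rl n r hn hr]
  ring

lemma diff_sq_sum (m : ℕ) (f : ℕ → ℝ) :
    ∑ i ∈ range m, (f i - f (i + 1)) ^ 2
      = (∑ i ∈ range (m + 1), f i ^ 2) * 2 - f 0 ^ 2 - f m ^ 2
        - 2 * (∑ i ∈ range m, f i * f (i + 1)) := by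
  induction m with
  | zero => simp; ring
  | succ k ih =>
    rw [Finset.sum_range_succ, ih, Finset.sum_range_succ (fun i => f i * f (i + 1)),
      Finset.sum_range_succ (fun i => f i ^ 2) (k + 1)]
    ring



lemma quad_identity (n r : ℕ) (hn : 2 ≤ n) (hr : 1 ≤ r) (x : Fin (2 * n) ⊕ Fin r → ℝ) :
    x ⬝ᵥ (gramDelta n r *ᵥ x)
      = uext (x ∘ inl) 0 ^ 2
        - ((uext (x ∘ inl) 0 + uext (x ∘ inl) (2 * n - 1)) ^ 2
          + (∑ i ∈ range (2 * n - 1), (uext (x ∘ inl) i - uext (x ∘ inl) (i + 1)) ^ 2)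
          + (uext (x ∘ inl) 0 - uext (x ∘ inr) (r - 1)) ^ 2
          + (∑ j ∈ range (r - 1), (uext (x ∘ inr) j - uext (x ∘ inr) (j + 1)) ^ 2)
          + uext (x ∘ inr) 0 ^ 2) := by
  have d1 := diff_sq_sum (2 * n - 1) (uext (x ∘ inl))
  have d2 := diff_sq_sum (r - 1) (uext (x ∘ inr))
  rw [show 2 * n - 1 + 1 = 2 * n by omega] at d1
  rw [show r - 1 + 1 = r by omega] at d2
  rw [quad_expand n r hn hr x, d1, d2]
  ring

lemma quad_neg (n r : ℕ) (hn : 2 ≤ n) (hr : 1 ≤ r) (x : Fin (2 * n) ⊕ Fin r → ℝ)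
    (h0 : uext (x ∘ inl) 0 = 0) (hx : x ≠ 0) :
    x ⬝ᵥ (gramDelta n r *ᵥ x) < 0 := by
  rw [quad_identity n r hn hr x, h0]
  set u := uext (x ∘ inl) with hu
  set w := uext (x ∘ inr) with hw
  have t2 : (0:ℝ) ≤ ∑ i ∈ range (2 * n - 1), (u i - u (i + 1)) ^ 2 :=
    Finset.sum_nonneg fun i _ => sq_nonneg _
  have t4 : (0:ℝ) ≤ ∑ j ∈ range (r - 1), (w j - w (j + 1)) ^ 2 :=
    Finset.sum_nonneg fun j _ => sq_nonneg _
  have key : 0 < (0 + u (2 * n - 1)) ^ 2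
          + (∑ i ∈ range (2 * n - 1), (u i - u (i + 1)) ^ 2)
          + (0 - w (r - 1)) ^ 2
          + (∑ j ∈ range (r - 1), (w j - w (j + 1)) ^ 2)
          + w 0 ^ 2 := by
    rcases lt_or_eq_of_le (by positivity :
        (0:ℝ) ≤ (0 + u (2 * n - 1)) ^ 2
          + (∑ i ∈ range (2 * n - 1), (u i - u (i + 1)) ^ 2)
          + (0 - w (r - 1)) ^ 2
          + (∑ j ∈ range (r - 1), (w j - w (j + 1)) ^ 2)
          + w 0 ^ 2) with hlt | heq
    · exact hlt
    exfalso
    have h2 : ∑ i ∈ range (2 * n - 1), (u i - u (i + 1)) ^ 2 = 0 := by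
      nlinarith [sq_nonneg (0 + u (2 * n - 1)), sq_nonneg (0 - w (r - 1)), sq_nonneg (w 0)]
    have h4 : ∑ j ∈ range (r - 1), (w j - w (j + 1)) ^ 2 = 0 := by
      nlinarith [sq_nonneg (0 + u (2 * n - 1)), sq_nonneg (0 - w (r - 1)), sq_nonneg (w 0)]
    have h5 : w 0 = 0 := by
      nlinarith [sq_nonneg (0 + u (2 * n - 1)), sq_nonneg (0 - w (r - 1)), sq_nonneg (w 0)]
    have hu2 : ∀ i ∈ range (2 * n - 1), (u i - u (i + 1)) ^ 2 = 0 := by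
      rw [← Finset.sum_eq_zero_iff_of_nonneg fun i _ => sq_nonneg _]; exact h2
    have hw2 : ∀ j ∈ range (r - 1), (w j - w (j + 1)) ^ 2 = 0 := by
      rw [← Finset.sum_eq_zero_iff_of_nonneg fun j _ => sq_nonneg _]; exact h4
    have hua : ∀ i, i < 2 * n → u i = 0 := by
      intro i
      induction i with
      | zero => intro _; exact h0
      | succ k ihk =>
        intro hk
        have hk' : k ∈ range (2 * n - 1) := Finset.mem_range.mpr (by omega)
        have := hu2 k hk'
        have hdiff : u k - u (k + 1) = 0 := by
          have := sq_eq_zero_iff.mp this; exact this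
        have := ihk (by omega)
        linarith
    have hwa : ∀ j, j < r → w j = 0 := by
      intro j
      induction j with
      | zero => intro _; exact h5
      | succ k ihk =>
        intro hk
        have hk' : k ∈ range (r - 1) := Finset.mem_range.mpr (by omega)
        have hdiff : w k - w (k + 1) = 0 := sq_eq_zero_iff.mp (hw2 k hk')
        have := ihk (by omega)
        linarith
    apply hx
    funext a
    cases a with
    | inl i =>
      have := hua i i.isLt
      rw [hu, uext_lt _ i.isLt] at this
      simpa using this
    | inr j =>
      have := hwa j j.isLt
      rw [hw, uext_lt _ j.isLt] at this
      simpa using this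
  have h02 : (0:ℝ) ^ 2 = 0 := by norm_num
  linarith

lemma quad_pos (n r : ℕ) (hn : 2 ≤ n) (hr : 1 ≤ r) (h : 2 / (n : ℝ) + 1 / (r : ℝ) < 1) :
    ∃ x : Fin (2 * n) ⊕ Fin r → ℝ, 0 < x ⬝ᵥ (gramDelta n r *ᵥ x) := by
  have hn0 : (0:ℝ) < (n : ℝ) := by exact_mod_cast (by omega : 0 < n)
  have hr0 : (0:ℝ) < (r : ℝ) := by exact_mod_cast hr
  have hr1 : (0:ℝ) < (r : ℝ) + 1 := by linarith
  set x : Fin (2 * n) ⊕ Fin r → ℝ :=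
    fun a => match a with
      | Sum.inl i => ((n : ℝ) - (i : ℕ)) / (n : ℝ)
      | Sum.inr j => (((j : ℕ) : ℝ) + 1) / ((r : ℝ) + 1) with hxdef
  refine ⟨x, ?_⟩
  have hu : ∀ k, k < 2 * n → uext (x ∘ inl) k = ((n : ℝ) - (k : ℝ)) / (n : ℝ) := by
    intro k hk
    rw [uext_lt _ hk]
    simp [hxdef]
  have hw : ∀ k, k < r → uext (x ∘ inr) k = ((k : ℝ) + 1) / ((r : ℝ) + 1) := by
    intro k hk
    rw [uext_lt _ hk]
    simp [hxdef]
  rw [quad_identity n r hn hr x]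
  have e0 : uext (x ∘ inl) 0 = 1 := by
    rw [hu 0 (by omega)]
    simp
    omega
  have e1 : uext (x ∘ inl) (2 * n - 1) = (1 - (n : ℝ)) / (n : ℝ) := by
    rw [hu (2 * n - 1) (by omega)]
    congr 1
    have : ((2 * n - 1 : ℕ) : ℝ) = 2 * (n : ℝ) - 1 := by
      push_cast [Nat.cast_sub (by omega : 1 ≤ 2 * n)]; ring
    rw [this]; ring
  have e2 : uext (x ∘ inr) (r - 1) = (r : ℝ) / ((r : ℝ) + 1) := by
    rw [hw (r - 1) (by omega)]
    congr 1
    have : ((r - 1 : ℕ) : ℝ) = (r : ℝ) - 1 := by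
      push_cast [Nat.cast_sub hr]; ring
    rw [this]; ring
  have e3 : uext (x ∘ inr) 0 = 1 / ((r : ℝ) + 1) := by
    rw [hw 0 (by omega)]; norm_num
  have s1 : ∑ i ∈ range (2 * n - 1), (uext (x ∘ inl) i - uext (x ∘ inl) (i + 1)) ^ 2
      = (2 * (n : ℝ) - 1) * (1 / (n : ℝ)) ^ 2 := by
    rw [Finset.sum_congr rfl (fun i hi => ?_), Finset.sum_const, card_range]
    · rw [nsmul_eq_mul]
      congr 1
      have : ((2 * n - 1 : ℕ) : ℝ) = 2 * (n : ℝ) - 1 := by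
        push_cast [Nat.cast_sub (by omega : 1 ≤ 2 * n)]; ring
      exact this
    · have hi' := Finset.mem_range.mp hi
      rw [hu i (by omega), hu (i + 1) (by omega)]
      push_cast
      rw [div_sub_div_same]
      congr 1
      ring
  have s2 : ∑ j ∈ range (r - 1), (uext (x ∘ inr) j - uext (x ∘ inr) (j + 1)) ^ 2
      = ((r : ℝ) - 1) * (1 / ((r : ℝ) + 1)) ^ 2 := by
    rw [Finset.sum_congr rfl (fun j hj => ?_), Finset.sum_const, card_range]
    · rw [nsmul_eq_mul]
      congr 1
      push_cast [Nat.cast_sub hr]; ring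
    · have hj' := Finset.mem_range.mp hj
      rw [hw j (by omega), hw (j + 1) (by omega)]
      push_cast
      rw [div_sub_div_same]
      have : ((j:ℝ) + 1 - ((j:ℝ) + 1 + 1)) = -1 := by ring
      rw [show ((j:ℝ) + 1 - ((j:ℝ) + 1 + 1)) / ((r:ℝ)+1) = (-1)/((r:ℝ)+1) by rw [this]]
      ring
  rw [e0, e1, e2, e3, s1, s2]
  have key : (1:ℝ) ^ 2
      - ((1 + (1 - (n : ℝ)) / (n : ℝ)) ^ 2
        + (2 * (n : ℝ) - 1) * (1 / (n : ℝ)) ^ 2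
        + (1 - (r : ℝ) / ((r : ℝ) + 1)) ^ 2
        + ((r : ℝ) - 1) * (1 / ((r : ℝ) + 1)) ^ 2
        + (1 / ((r : ℝ) + 1)) ^ 2)
      = 1 - 2 / (n : ℝ) - 1 / ((r : ℝ) + 1) := by
    field_simp
    ring
  rw [key]
  have hlt : 1 / ((r : ℝ) + 1) < 1 / (r : ℝ) := by
    apply one_div_lt_one_div_of_lt hr0
    linarith
  linarith

theorem main_count (n r : ℕ) (hn : 2 ≤ n) (hr : 1 ≤ r) (h : 2 / (n : ℝ) + 1 / (r : ℝ) < 1)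
    (hA : (gramDelta n r).IsHermitian) :
    (gramDelta n r).det ≠ 0 ∧
      (Finset.univ.filter (fun i => 0 < hA.eigenvalues i)).card = 1 := by
  set A := gramDelta n r with hAdef
  set ev := hA.eigenvalues with hev
  set U : Matrix (Fin (2 * n) ⊕ Fin r) (Fin (2 * n) ⊕ Fin r) ℝ :=
    ((Matrix.IsHermitian.eigenvectorUnitary hA :
      Matrix.unitaryGroup (Fin (2 * n) ⊕ Fin r) ℝ) :
        Matrix (Fin (2 * n) ⊕ Fin r) (Fin (2 * n) ⊕ Fin r) ℝ) with hUdef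
  have h1 : U * star U = 1 :=
    (Matrix.mem_unitaryGroup_iff).mp (Matrix.IsHermitian.eigenvectorUnitary hA).2
  have h2 : star U * U = 1 :=
    (Matrix.mem_unitaryGroup_iff').mp (Matrix.IsHermitian.eigenvectorUnitary hA).2
  have hspec : A = U * Matrix.diagonal ev * star U := by
    have hh := hA.spectral_theorem
    rwa [show RCLike.ofReal ∘ hA.eigenvalues = hA.eigenvalues from funext fun i => by simp]
      at hh
  have Qform : ∀ y : Fin (2 * n) ⊕ Fin r → ℝ,
      (U *ᵥ y) ⬝ᵥ (A *ᵥ (U *ᵥ y)) = ∑ i, ev i * y i ^ 2 := by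
    intro y
    have hAv : A *ᵥ (U *ᵥ y) = U *ᵥ (Matrix.diagonal ev *ᵥ y) := by
      rw [hspec, Matrix.mulVec_mulVec, mul_assoc (U * Matrix.diagonal ev) (star U) U, h2,
        mul_one, ← Matrix.mulVec_mulVec]
    rw [hAv]
    have dot : ∀ z, (U *ᵥ y) ⬝ᵥ (U *ᵥ z) = y ⬝ᵥ z := by
      intro z
      rw [Matrix.dotProduct_mulVec]
      congr 1
      rw [show U *ᵥ y = y ᵥ* Uᵀ from (Matrix.vecMul_transpose U y).symm,
        Matrix.vecMul_vecMul]
      have hT : Uᵀ = star U := by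
        ext i j
        simp [Matrix.star_eq_conjTranspose, Matrix.conjTranspose_apply]
      rw [hT, h2, Matrix.vecMul_one]
    rw [dot]
    simp only [dotProduct, Matrix.mulVec_diagonal]
    exact Finset.sum_congr rfl fun i _ => by ring
  have hsur : ∀ xv : Fin (2 * n) ⊕ Fin r → ℝ, U *ᵥ (star U *ᵥ xv) = xv := fun xv => by
    rw [Matrix.mulVec_mulVec, h1, Matrix.one_mulVec]
  have hback : ∀ y : Fin (2 * n) ⊕ Fin r → ℝ, star U *ᵥ (U *ᵥ y) = y := fun y => by
    rw [Matrix.mulVec_mulVec, h2, Matrix.one_mulVec]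
  have hpos0 : 0 < 2 * n := by omega
  set i0 : Fin (2 * n) := ⟨0, hpos0⟩ with hi0def
  -- at most one nonnegative eigenvalue
  have claim1 : ∀ a b, a ≠ b → 0 ≤ ev a → 0 ≤ ev b → False := by
    intro a b hab ha hb
    have main : ∀ y : Fin (2 * n) ⊕ Fin r → ℝ, y ≠ 0 → (U *ᵥ y) (inl i0) = 0 →
        (∀ i, i ≠ a → i ≠ b → y i = 0) → False := by
      intro y hy h0 hsupp
      set xv := U *ᵥ y with hxv
      have hxne : xv ≠ 0 := by
        intro hx0
        apply hy
        rw [← hback y, ← hxv, hx0, Matrix.mulVec_zero]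
      have h0' : uext (xv ∘ inl) 0 = 0 := by
        rw [uext_lt _ hpos0]
        exact h0
      have hneg := quad_neg n r hn hr xv h0' hxne
      have hQ : xv ⬝ᵥ (gramDelta n r *ᵥ xv) = ∑ i, ev i * y i ^ 2 := Qform y
      have hge : (0:ℝ) ≤ ∑ i, ev i * y i ^ 2 := by
        apply Finset.sum_nonneg
        intro i _
        by_cases hia : i = a
        · subst hia; exact mul_nonneg ha (sq_nonneg _)
        by_cases hib : i = b
        · subst hib; exact mul_nonneg hb (sq_nonneg _)
        rw [hsupp i hia hib]
        simp
      rw [hQ] at hneg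
      linarith
    set p := U (inl i0) a with hp
    set q := U (inl i0) b with hq
    by_cases hpq : p = 0 ∧ q = 0
    · apply main (Pi.single a 1)
      · intro hc
        have := congrFun hc a
        simp [Pi.single_eq_same] at this
      · have : U *ᵥ Pi.single a 1 = fun i => U i a := by
          funext i
          simp [Matrix.mulVec_single]
        rw [this]
        exact hpq.1
      · intro i hia _
        exact Pi.single_eq_of_ne hia 1
    · push_neg at hpq
      set y2 : (Fin (2 * n) ⊕ Fin r) → ℝ :=
        q • (Pi.single a (1:ℝ) : (Fin (2 * n) ⊕ Fin r) → ℝ)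
          - p • (Pi.single b (1:ℝ) : (Fin (2 * n) ⊕ Fin r) → ℝ) with hy2
      apply main y2
      · intro hc
        have hca := congrFun hc a
        have hcb := congrFun hc b
        simp [hy2, Pi.single_eq_same, Pi.single_eq_of_ne hab, Pi.single_eq_of_ne hab.symm] at hca hcb
        by_cases hp0 : p = 0
        · exact hpq hp0 hca
        · exact hp0 hcb
      · rw [hy2, Matrix.mulVec_sub, Matrix.mulVec_smul, Matrix.mulVec_smul]
        have hsa : U *ᵥ Pi.single a 1 = fun i => U i a := by
          funext i; simp [Matrix.mulVec_single]
        have hsb : U *ᵥ Pi.single b 1 = fun i => U i b := by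
          funext i; simp [Matrix.mulVec_single]
        rw [hsa, hsb]
        simp only [Pi.sub_apply, Pi.smul_apply, smul_eq_mul]
        ring
      · intro i hia hib
        simp [hy2, Pi.single_eq_of_ne hia, Pi.single_eq_of_ne hib]
  -- at least one positive eigenvalue
  have claim2 : ∃ i, 0 < ev i := by
    obtain ⟨xp, hxp⟩ := quad_pos n r hn hr h
    have hq := Qform (star U *ᵥ xp)
    rw [hsur xp] at hq
    by_contra hno
    push_neg at hno
    have : xp ⬝ᵥ (gramDelta n r *ᵥ xp) ≤ 0 := by
      rw [hq]
      apply Finset.sum_nonpos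
      intro i _
      exact mul_nonpos_of_nonpos_of_nonneg (hno i) (sq_nonneg _)
    linarith
  obtain ⟨ip, hip⟩ := claim2
  have hcard_le : (Finset.univ.filter (fun i => 0 ≤ ev i)).card ≤ 1 := by
    by_contra hc
    push_neg at hc
    obtain ⟨a, hamem, b, hbmem, hab⟩ := Finset.one_lt_card.mp hc
    exact claim1 a b hab (Finset.mem_filter.mp hamem).2 (Finset.mem_filter.mp hbmem).2
  have hsub : (Finset.univ.filter (fun i => 0 < ev i))
      ⊆ (Finset.univ.filter (fun i => 0 ≤ ev i)) := by
    intro i hi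
    rw [Finset.mem_filter] at hi ⊢
    exact ⟨hi.1, le_of_lt hi.2⟩
  have hcard1 : (Finset.univ.filter (fun i => 0 < ev i)).card = 1 := by
    have hle := le_trans (Finset.card_le_card hsub) hcard_le
    have hpos : 0 < (Finset.univ.filter (fun i => 0 < ev i)).card := by
      apply Finset.card_pos.mpr
      exact ⟨ip, Finset.mem_filter.mpr ⟨Finset.mem_univ _, hip⟩⟩
    omega
  have hall : ∀ i, ev i ≠ 0 := by
    intro i hev0
    have hmi : i ∈ Finset.univ.filter (fun j => 0 ≤ ev j) :=
      Finset.mem_filter.mpr ⟨Finset.mem_univ _, le_of_eq hev0.symm⟩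
    have hmp : ip ∈ Finset.univ.filter (fun j => 0 ≤ ev j) :=
      Finset.mem_filter.mpr ⟨Finset.mem_univ _, le_of_lt hip⟩
    have hne : i ≠ ip := by
      intro he
      rw [he] at hev0
      exact absurd hev0 (ne_of_gt hip)
    have : 1 < (Finset.univ.filter (fun j => 0 ≤ ev j)).card :=
      Finset.one_lt_card.mpr ⟨i, hmi, ip, hmp, hne⟩
    omega
  constructor
  · rw [hA.det_eq_prod_eigenvalues]
    apply Finset.prod_ne_zero_iff.mpr
    intro i _
    simpa using hall i
  · exact hcard1

/-- For `n ≥ 2`, `r ≥ 1` with `2/n + 1/r < 1`, the Gram matrix of `Δ⁻_{2n,r}`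
is hyperbolic: nondegenerate with exactly one positive eigenvalue. -/
theorem gramDelta_hyperbolic (n r : ℕ) (hn : 2 ≤ n) (hr : 1 ≤ r)
    (h : 2 / (n : ℝ) + 1 / (r : ℝ) < 1) :
    (gramDelta n r).det ≠ 0 ∧
    ∃ hB : (gramDelta n r).IsHermitian,
      (Finset.univ.filter (fun i => 0 < hB.eigenvalues i)).card = 1 := by
  have hA : (gramDelta n r).IsHermitian := gramDelta_isHermitian n r
  obtain ⟨hdet, hcard⟩ := main_count n r hn hr h hA
  exact ⟨hdet, hA, hcard⟩
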